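/- Let R be a ring, n ≥ 1 an integer, and 𝒳 a class of left R-modules. For a left R-module M the following are equivalent: (1) M is n-𝒳-injective; (2) every short exact sequence 0 → M → A → C → 0 of left R-modules is special 𝒳-pure; (3) M is a special 𝒳-pure submodule of every injective left R-module containing it; (4) M is a special 𝒳-pure submodule of its injective envelope E(M). -/

import Mathlib

/- Common framework: `n`-presented modules, syzygies, special 𝒳-presented modules,
   Ext/Tor vanishing (Tor via a hand-rolled tensor product over a possibly
   noncommutative ring, since Mathlib's tensor product requires commutativity),
   `n`-𝒳-injective / `n`-𝒳-flat modules, and the Gorenstein versions. -/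

universe u
open CategoryTheory LinearMap DirectSum

section Basic

variable (R : Type u) [Ring R]

/-- `U` is an `n`-presented left `R`-module: there is an exact sequence
`F_n → ⋯ → F_0 → U → 0` with each `F_i` finitely generated free. -/
def IsNPresented : ℕ → ModuleCat.{u} R → Prop
  | 0, U => Module.Finite R U
  | n + 1, U => ∃ (F : ModuleCat.{u} R) (f : F →ₗ[R] U),
      Module.Free R F ∧ Module.Finite R F ∧ Function.Surjective f ∧
      IsNPresented n (ModuleCat.of R (LinearMap.ker f))

/-- `K` is a `j`-th syzygy of `U` computed from finitely generated free modules: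
`IsSyzygy 0 U K` iff `K ≅ U`, and a `(j+1)`-st syzygy of `U` is a `j`-th syzygy of the
kernel of a surjection from a finitely generated free module onto `U`. -/
def IsSyzygy : ℕ → ModuleCat.{u} R → ModuleCat.{u} R → Prop
  | 0, U, K => Nonempty (K ≃ₗ[R] U)
  | j + 1, U, K => ∃ (F : ModuleCat.{u} R) (f : F →ₗ[R] U),
      Module.Free R F ∧ Module.Finite R F ∧ Function.Surjective f ∧
      IsSyzygy j (ModuleCat.of R (LinearMap.ker f)) K

/-- `Ext_R^k(U, M) = 0`. -/
noncomputable def ExtVanishes (k : ℕ) (U M : ModuleCat.{u} R) : Prop :=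
  Subsingleton (((Ext ℤ (ModuleCat.{u} R) k).obj (Opposite.op U)).obj M)

variable (𝒳 : Set (ModuleCat.{u} R)) (n : ℕ)

/-- `K` is a special 𝒳-presented module: `K` is the image `K_{n-1} = Im(F_{n-1} → F_{n-2})`
arising from an `n`-presentation of some `U ∈ 𝒳` (with the convention `K = U` when `n = 1`),
i.e. `K` is an `(n-1)`-st syzygy of some `n`-presented `U ∈ 𝒳`. -/
def IsSpecialPresented (K : ModuleCat.{u} R) : Prop :=
  ∃ U ∈ 𝒳, IsNPresented R n U ∧ IsSyzygy R (n - 1) U K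

/-- `M` is an `n`-𝒳-injective left `R`-module: `Ext_R^n(U, M) = 0` for every
`n`-presented `U ∈ 𝒳`. -/
noncomputable def IsNXInjective (M : ModuleCat.{u} R) : Prop :=
  ∀ U ∈ 𝒳, IsNPresented R n U → ExtVanishes R n U M

/-- Projective dimension at most `m`. -/
def ProjDimLE : ℕ → ModuleCat.{u} R → Prop
  | 0, K => Module.Projective R K
  | m + 1, K => ∃ (P : ModuleCat.{u} R) (f : P →ₗ[R] K),
      Module.Projective R P ∧ Function.Surjective f ∧
      ProjDimLE m (ModuleCat.of R (LinearMap.ker f))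

/-- Finite projective dimension. -/
def HasFiniteProjDim (K : ModuleCat.{u} R) : Prop := ∃ m, ProjDimLE R m K

/-- `R` is left `n`-𝒳-coherent: every `n`-presented module in `𝒳` is `(n+1)`-presented. -/
def IsNXCoherent : Prop := ∀ U ∈ 𝒳, IsNPresented R n U → IsNPresented R (n + 1) U

/-- `M` has `n`-𝒳-injective dimension at most `m`:
`Ext_R^{n+i}(U, M) = 0` for all `i ≥ m + 1` and all `n`-presented `U ∈ 𝒳`. -/
noncomputable def NXInjDimLE (m : ℕ) (M : ModuleCat.{u} R) : Prop :=
  ∀ U ∈ 𝒳, IsNPresented R n U → ∀ i : ℕ, m + 1 ≤ i → ExtVanishes R (n + i) U M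

/-- `M` has finite `n`-𝒳-injective dimension. -/
noncomputable def HasFiniteNXInjDim (M : ModuleCat.{u} R) : Prop := ∃ m, NXInjDimLE R 𝒳 n m M

end Basic

section Tensor

variable (R : Type u) [Ring R]

/-- The defining relations of the tensor product `N ⊗_R U` of a right `R`-module `N`
with a left `R`-module `U`, inside `N ⊗_ℤ U`. -/
def tensorRel (N : Type u) [AddCommGroup N] [Module Rᵐᵒᵖ N]
    (U : Type u) [AddCommGroup U] [Module R U] : Submodule ℤ (TensorProduct ℤ N U) :=
  Submodule.span ℤ {x | ∃ (r : R) (a : N) (v : U),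
    x = (MulOpposite.op r • a) ⊗ₜ[ℤ] v - a ⊗ₜ[ℤ] (r • v)}

/-- The tensor product `N ⊗_R U` of a right `R`-module `N` with a left `R`-module `U`
over a (possibly noncommutative) ring `R`, as an abelian group. -/
abbrev RTensor (N : Type u) [AddCommGroup N] [Module Rᵐᵒᵖ N]
    (U : Type u) [AddCommGroup U] [Module R U] : Type u :=
  TensorProduct ℤ N U ⧸ tensorRel R N U

/-- Functoriality of `RTensor` in both variables. -/
noncomputable def rtmap {N N' : Type u} [AddCommGroup N] [Module Rᵐᵒᵖ N]
    [AddCommGroup N'] [Module Rᵐᵒᵖ N']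
    {U U' : Type u} [AddCommGroup U] [Module R U] [AddCommGroup U'] [Module R U']
    (g : N →ₗ[Rᵐᵒᵖ] N') (f : U →ₗ[R] U') :
    RTensor R N U →ₗ[ℤ] RTensor R N' U' :=
  Submodule.mapQ (tensorRel R N U) (tensorRel R N' U')
    (TensorProduct.map g.toAddMonoidHom.toIntLinearMap f.toAddMonoidHom.toIntLinearMap)
    (by
      rw [tensorRel, Submodule.span_le]
      rintro x ⟨r, a, v, rfl⟩
      simp only [SetLike.mem_coe, Submodule.mem_comap, map_sub, TensorProduct.map_tmul,
        AddMonoidHom.coe_toIntLinearMap, LinearMap.toAddMonoidHom_coe]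
      apply Submodule.subset_span
      exact ⟨r, g a, f v, by erw [map_sub, TensorProduct.map_tmul, TensorProduct.map_tmul]; simp⟩)

/-- A left `R`-module `M` is flat if `- ⊗_R M` preserves injections of right `R`-modules. -/
noncomputable def IsFlatModule (M : ModuleCat.{u} R) : Prop :=
  ∀ (A B : ModuleCat.{u} Rᵐᵒᵖ) (i : A →ₗ[Rᵐᵒᵖ] B), Function.Injective i →
    Function.Injective (rtmap R i (LinearMap.id (M := M)))

/-- A right `R`-module `N` is flat if `N ⊗_R -` preserves injections of left `R`-modules. -/
noncomputable def IsFlatRight (N : ModuleCat.{u} Rᵐᵒᵖ) : Prop :=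
  ∀ (A B : ModuleCat.{u} R) (i : A →ₗ[R] B), Function.Injective i →
    Function.Injective (rtmap R (LinearMap.id (M := N)) i)

/-- Flat dimension of a left `R`-module at most `m`. -/
noncomputable def FlatDimLE : ℕ → ModuleCat.{u} R → Prop
  | 0, K => IsFlatModule R K
  | m + 1, K => ∃ (P : ModuleCat.{u} R) (f : P →ₗ[R] K),
      IsFlatModule R P ∧ Function.Surjective f ∧
      FlatDimLE m (ModuleCat.of R (LinearMap.ker f))

/-- Finite flat dimension. -/
noncomputable def HasFiniteFlatDim (K : ModuleCat.{u} R) : Prop := ∃ m, FlatDimLE R m K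

variable (𝒳 : Set (ModuleCat.{u} R)) (n : ℕ)

/-- `Tor^R_k(N, U) = 0` for a right `R`-module `N` and a left `R`-module `U`, `k ≥ 1`:
by dimension shifting this says that for every `(k-1)`-st syzygy `K` of `U` and every
surjection `f : F → K` with `F` free, the induced map `N ⊗ ker f → N ⊗ F` is injective. -/
noncomputable def TorVanishes (k : ℕ) (N : ModuleCat.{u} Rᵐᵒᵖ) (U : ModuleCat.{u} R) : Prop :=
  ∀ (K : ModuleCat.{u} R), IsSyzygy R (k - 1) U K →
    ∀ (F : ModuleCat.{u} R) (f : F →ₗ[R] K), Module.Free R F → Function.Surjective f →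
      Function.Injective
        (rtmap R (LinearMap.id (M := N)) (LinearMap.ker f).subtype)

/-- `N` is an `n`-𝒳-flat right `R`-module: `Tor^R_n(N, U) = 0` for every
`n`-presented `U ∈ 𝒳`. -/
noncomputable def IsNXFlat (N : ModuleCat.{u} Rᵐᵒᵖ) : Prop :=
  ∀ U ∈ 𝒳, IsNPresented R n U → TorVanishes R n N U

/-- `N` has `n`-𝒳-flat dimension at most `m`:
`Tor^R_{n+i}(N, U) = 0` for all `i ≥ m + 1` and all `n`-presented `U ∈ 𝒳`. -/
noncomputable def NXFlatDimLE (m : ℕ) (N : ModuleCat.{u} Rᵐᵒᵖ) : Prop :=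
  ∀ U ∈ 𝒳, IsNPresented R n U → ∀ i : ℕ, m + 1 ≤ i → TorVanishes R (n + i) N U

/-- `N` has finite `n`-𝒳-flat dimension. -/
noncomputable def HasFiniteNXFlatDim (N : ModuleCat.{u} Rᵐᵒᵖ) : Prop := ∃ m, NXFlatDimLE R 𝒳 n m N

end Tensor

section Pure

variable (R : Type u) [Ring R] (𝒳 : Set (ModuleCat.{u} R)) (n : ℕ)

/-- A short exact sequence `0 → A → B → C → 0` of left `R`-modules (given by `i` and `p`)
is special 𝒳-pure if `0 → Hom(K, A) → Hom(K, B) → Hom(K, C) → 0` is exact for every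
special 𝒳-presented module `K`. -/
def IsSpecialXPure {A B C : Type u} [AddCommGroup A] [Module R A] [AddCommGroup B] [Module R B]
    [AddCommGroup C] [Module R C] (i : A →ₗ[R] B) (p : B →ₗ[R] C) : Prop :=
  ∀ K : ModuleCat.{u} R, IsSpecialPresented R 𝒳 n K →
    Function.Injective (fun g : K →ₗ[R] A => i.comp g) ∧
    Function.Exact (fun g : K →ₗ[R] A => i.comp g) (fun g : K →ₗ[R] B => p.comp g) ∧
    Function.Surjective (fun g : K →ₗ[R] B => p.comp g)

/-- A short exact sequence `0 → A → B → C → 0` of right `R`-modules (given by `i` and `p`)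
is special 𝒳-pure if `0 → A ⊗ K → B ⊗ K → C ⊗ K → 0` is exact for every special
𝒳-presented (left `R`-) module `K`. -/
noncomputable def IsSpecialXPureRight {A B C : Type u}
    [AddCommGroup A] [Module Rᵐᵒᵖ A] [AddCommGroup B] [Module Rᵐᵒᵖ B]
    [AddCommGroup C] [Module Rᵐᵒᵖ C] (i : A →ₗ[Rᵐᵒᵖ] B) (p : B →ₗ[Rᵐᵒᵖ] C) : Prop :=
  ∀ K : ModuleCat.{u} R, IsSpecialPresented R 𝒳 n K →
    Function.Injective (rtmap R i (LinearMap.id (M := K))) ∧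
    Function.Exact (rtmap R i (LinearMap.id (M := K))) (rtmap R p (LinearMap.id (M := K))) ∧
    Function.Surjective (rtmap R p (LinearMap.id (M := K)))

/-- `R` is self left `n`-𝒳-injective. -/
noncomputable def IsSelfNXInjective : Prop := IsNXInjective R 𝒳 n (ModuleCat.of R R)

end Pure

section Gorenstein

variable (R : Type u) [Ring R] (𝒳 : Set (ModuleCat.{u} R)) (n : ℕ)

/-- `G` is a Gorenstein `n`-𝒳-injective left `R`-module: there is an exact complex
`⋯ → A_1 → A_0 → A^0 → A^1 → ⋯` of `n`-𝒳-injective modules with `G = ker(A^0 → A^1)`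
which stays exact under `Hom_R(K, -)` for every special 𝒳-presented `K` of finite
projective dimension. -/
noncomputable def IsGorNXInjective (G : ModuleCat.{u} R) : Prop :=
  ∃ (C : ℤ → ModuleCat.{u} R) (d : ∀ i : ℤ, C i →ₗ[R] C (i - 1)),
    (∀ i, IsNXInjective R 𝒳 n (C i)) ∧
    (∀ i : ℤ, Function.Exact (d i) (d (i - 1))) ∧
    Nonempty (G ≃ₗ[R] LinearMap.ker (d 0)) ∧
    (∀ K : ModuleCat.{u} R, IsSpecialPresented R 𝒳 n K → HasFiniteProjDim R K →
      ∀ i : ℤ, Function.Exact (fun g : K →ₗ[R] C i => (d i).comp g)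
        (fun g : K →ₗ[R] C (i - 1) => (d (i - 1)).comp g))

/-- `G` is a Gorenstein `n`-𝒳-flat right `R`-module: there is an exact complex
`⋯ → F_1 → F_0 → F^0 → F^1 → ⋯` of `n`-𝒳-flat right modules with `G = ker(F^0 → F^1)`
which stays exact under `- ⊗_R K` for every special 𝒳-presented `K` of finite
flat dimension. -/
noncomputable def IsGorNXFlat (G : ModuleCat.{u} Rᵐᵒᵖ) : Prop :=
  ∃ (C : ℤ → ModuleCat.{u} Rᵐᵒᵖ) (d : ∀ i : ℤ, C i →ₗ[Rᵐᵒᵖ] C (i - 1)),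
    (∀ i, IsNXFlat R 𝒳 n (C i)) ∧
    (∀ i : ℤ, Function.Exact (d i) (d (i - 1))) ∧
    Nonempty (G ≃ₗ[Rᵐᵒᵖ] LinearMap.ker (d 0)) ∧
    (∀ K : ModuleCat.{u} R, IsSpecialPresented R 𝒳 n K → HasFiniteFlatDim R K →
      ∀ i : ℤ, Function.Exact (rtmap R (d i) (LinearMap.id (M := K)))
        (rtmap R (d (i - 1)) (LinearMap.id (M := K))))

end Gorenstein

section GorensteinAbsolute

/-- `G` is a Gorenstein injective module over `S`: there is an exact complex of injective
modules with `G = ker(E^0 → E^1)` which stays exact under `Hom(I, -)` for every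
injective module `I`. -/
noncomputable def IsGorensteinInjective (S : Type u) [Ring S] (G : ModuleCat.{u} S) : Prop :=
  ∃ (C : ℤ → ModuleCat.{u} S) (d : ∀ i : ℤ, C i →ₗ[S] C (i - 1)),
    (∀ i, Module.Injective S (C i)) ∧
    (∀ i : ℤ, Function.Exact (d i) (d (i - 1))) ∧
    Nonempty (G ≃ₗ[S] LinearMap.ker (d 0)) ∧
    (∀ I : ModuleCat.{u} S, Module.Injective S I →
      ∀ i : ℤ, Function.Exact (fun g : I →ₗ[S] C i => (d i).comp g)
        (fun g : I →ₗ[S] C (i - 1) => (d (i - 1)).comp g))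

/-- `G` is a Gorenstein projective module over `S`: there is an exact complex of projective
modules with `G = ker(P^0 → P^1)` which stays exact under `Hom(-, Q)` for every
projective module `Q`. -/
def IsGorensteinProjective (S : Type u) [Ring S] (G : ModuleCat.{u} S) : Prop :=
  ∃ (C : ℤ → ModuleCat.{u} S) (d : ∀ i : ℤ, C i →ₗ[S] C (i - 1)),
    (∀ i, Module.Projective S (C i)) ∧
    (∀ i : ℤ, Function.Exact (d i) (d (i - 1))) ∧
    Nonempty (G ≃ₗ[S] LinearMap.ker (d 0)) ∧
    (∀ Q : ModuleCat.{u} S, Module.Projective S Q →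
      ∀ i : ℤ, Function.Exact (fun g : C (i - 1 - 1) →ₗ[S] Q => g.comp (d (i - 1)))
        (fun g : C (i - 1) →ₗ[S] Q => g.comp (d i)))

variable (R : Type u) [Ring R]

/-- `G` is a Gorenstein flat left `R`-module: there is an exact complex of flat left modules
with `G = ker(F^0 → F^1)` which stays exact under `E ⊗_R -` for every injective right
`R`-module `E`. -/
noncomputable def IsGorensteinFlatLeft (G : ModuleCat.{u} R) : Prop :=
  ∃ (C : ℤ → ModuleCat.{u} R) (d : ∀ i : ℤ, C i →ₗ[R] C (i - 1)),
    (∀ i, IsFlatModule R (C i)) ∧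
    (∀ i : ℤ, Function.Exact (d i) (d (i - 1))) ∧
    Nonempty (G ≃ₗ[R] LinearMap.ker (d 0)) ∧
    (∀ E : ModuleCat.{u} Rᵐᵒᵖ, Module.Injective Rᵐᵒᵖ E →
      ∀ i : ℤ, Function.Exact (rtmap R (LinearMap.id (M := E)) (d i))
        (rtmap R (LinearMap.id (M := E)) (d (i - 1))))

/-- `G` is a Gorenstein flat right `R`-module: there is an exact complex of flat right modules
with `G = ker(F^0 → F^1)` which stays exact under `- ⊗_R E` for every injective left
`R`-module `E`. -/
noncomputable def IsGorensteinFlatRight (G : ModuleCat.{u} Rᵐᵒᵖ) : Prop :=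
  ∃ (C : ℤ → ModuleCat.{u} Rᵐᵒᵖ) (d : ∀ i : ℤ, C i →ₗ[Rᵐᵒᵖ] C (i - 1)),
    (∀ i, IsFlatRight R (C i)) ∧
    (∀ i : ℤ, Function.Exact (d i) (d (i - 1))) ∧
    Nonempty (G ≃ₗ[Rᵐᵒᵖ] LinearMap.ker (d 0)) ∧
    (∀ E : ModuleCat.{u} R, Module.Injective R E →
      ∀ i : ℤ, Function.Exact (rtmap R (d i) (LinearMap.id (M := E)))
        (rtmap R (d (i - 1)) (LinearMap.id (M := E))))

end GorensteinAbsolute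

/-! ### Auxiliary development for `statement_0` -/

namespace SXP

open LinearMap

section FreeResolutions

variable {R : Type u} [Ring R]

/-- Raw data of a free resolution. -/
structure FreeRes (U : ModuleCat.{u} R) where
  X : ℕ → ModuleCat.{u} R
  d : ∀ i, X (i+1) →ₗ[R] X i
  ε : X 0 →ₗ[R] U
  free : ∀ i, Module.Free R (X i)
  hε : Function.Surjective ε
  h0 : Function.Exact (d 0) ε
  hd : ∀ i, Function.Exact (d (i+1)) (d i)

variable {U M : ModuleCat.{u} R}

lemma subsingleton_iff_isZero {A : ModuleCat.{u} ℤ} : Subsingleton A ↔ Limits.IsZero A := by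
  constructor
  · intro h; exact ModuleCat.isZero_of_subsingleton A
  · intro h
    rw [Limits.IsZero.iff_id_eq_zero] at h
    have h0 : ∀ a : A, a = 0 := fun a =>
      calc a = (𝟙 A : A ⟶ A) a := rfl
        _ = ((0 : A ⟶ A)) a := by rw [h]
        _ = 0 := rfl
    exact ⟨fun a b => by rw [h0 a, h0 b]⟩

noncomputable def FreeRes.complex (P : FreeRes U) : ChainComplex (ModuleCat.{u} R) ℕ :=
  ChainComplex.of P.X (fun i => ModuleCat.ofHom (P.d i))
    (fun i => ModuleCat.hom_ext (LinearMap.ext fun x => (P.hd i).apply_apply_eq_zero x))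

@[simp] lemma FreeRes.complex_X (P : FreeRes U) (i : ℕ) : P.complex.X i = P.X i := rfl

@[simp] lemma FreeRes.complex_d (P : FreeRes U) (i : ℕ) :
    P.complex.d (i+1) i = ModuleCat.ofHom (P.d i) := ChainComplex.of_d P.X (fun i => ModuleCat.ofHom (P.d i)) i

lemma FreeRes.exactAt_succ (P : FreeRes U) (n : ℕ) : P.complex.ExactAt (n+1) := by
  rw [HomologicalComplex.exactAt_iff' _ (n+2) (n+1) n (by simp) (by simp)]
  rw [ShortComplex.moduleCat_exact_iff]
  intro x hx
  have hx' : P.d n x = 0 := by simp at hx; exact hx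
  obtain ⟨y, hy⟩ := ((P.hd n) x).mp hx'
  exact ⟨y, by simp; exact hy⟩

noncomputable def FreeRes.resolution (P : FreeRes U) : ProjectiveResolution U where
  complex := P.complex
  projective n := by
    have := P.free n
    exact (IsProjective.iff_projective (R := R) (P := P.X n)).mp inferInstance
  π := (ChainComplex.toSingle₀Equiv _ _).symm ⟨ModuleCat.ofHom P.ε, by
        ext x
        exact P.h0.apply_apply_eq_zero x⟩
  quasiIso := ⟨fun n => by
    cases n with
    | zero =>
      rw [ChainComplex.quasiIsoAt₀_iff, ShortComplex.quasiIso_iff_of_zeros']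
      · refine ⟨?_, ?_⟩
        · rw [ShortComplex.moduleCat_exact_iff]
          intro x hx
          have hx' : P.ε x = 0 := by
            simp [ChainComplex.toSingle₀Equiv] at hx; exact hx
          obtain ⟨y, hy⟩ := (P.h0 x).mp hx'
          exact ⟨y, by simp; exact hy⟩
        · rw [ModuleCat.epi_iff_surjective]
          intro x
          obtain ⟨y, hy⟩ := P.hε x
          exact ⟨y, by simp [ChainComplex.toSingle₀Equiv]; exact hy⟩
      all_goals rfl
    | succ n =>
      rw [quasiIsoAt_iff_exactAt']
      · apply FreeRes.exactAt_succ
      · apply ChainComplex.exactAt_succ_single_obj⟩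

/-- Computation of `Ext` from a free resolution. -/
lemma FreeRes.extVanishes_iff (P : FreeRes U) (m : ℕ) :
    ExtVanishes R (m+1) U M ↔
      ∀ g : P.X (m+1) →ₗ[R] M, g.comp (P.d (m+1)) = 0 →
        ∃ h : P.X m →ₗ[R] M, h.comp (P.d m) = g := by
  have iso := P.resolution.isoExt (R := ℤ) (m+1) M
  rw [show ExtVanishes R (m+1) U M ↔
      Subsingleton ((P.resolution.complex.linearYonedaObj ℤ M).homology (m+1)) from
    ⟨fun h => ⟨fun a b => by
        have := (((forget (ModuleCat ℤ)).mapIso iso).toEquiv).symm.injective; exact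
        this.eq_iff.mp (h.elim _ _)⟩,
     fun h => ⟨fun a b => by
        have := (((forget (ModuleCat ℤ)).mapIso iso).toEquiv).injective
        exact this (h.elim _ _)⟩⟩]
  rw [subsingleton_iff_isZero, ← HomologicalComplex.exactAt_iff_isZero_homology]
  rw [HomologicalComplex.exactAt_iff' _ m (m+1) (m+2) (by simp) (by simp)]
  rw [ShortComplex.moduleCat_exact_iff]
  constructor
  · intro H g hg
    have hg' : (P.resolution.complex.linearYonedaObj ℤ M).d (m+1) (m+2)
        (show P.resolution.complex.X (m+1) ⟶ M from ModuleCat.ofHom g) = 0 := by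
      show (P.complex.d (m+2) (m+1) ≫ ModuleCat.ofHom g : P.complex.X (m+2) ⟶ M) = 0
      rw [show P.complex.d (m+2) (m+1) = ModuleCat.ofHom (P.d (m+1)) from P.complex_d (m+1)]
      ext x
      exact LinearMap.congr_fun hg x
    obtain ⟨h, hh⟩ := H _ hg'
    refine ⟨h.hom, ?_⟩
    have : P.complex.d (m+1) m ≫ h = ModuleCat.ofHom g := hh
    rw [P.complex_d m] at this
    exact congrArg ModuleCat.Hom.hom this
  · intro H g hg
    have hg' : g.hom.comp (P.d (m+1)) = 0 := by
      have : P.complex.d (m+2) (m+1) ≫ g = 0 := hg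
      rw [show P.complex.d (m+2) (m+1) = ModuleCat.ofHom (P.d (m+1)) from P.complex_d (m+1)] at this
      exact congrArg ModuleCat.Hom.hom this
    obtain ⟨h, hh⟩ := H _ hg'
    refine ⟨ModuleCat.ofHom h, ?_⟩
    show P.complex.d (m+1) m ≫ ModuleCat.ofHom h = g
    rw [P.complex_d m]
    ext x
    exact LinearMap.congr_fun hh x

/-- Factoring a linear map through a surjection whose kernel it kills. -/
lemma factor {A B W : Type u} [AddCommGroup A] [Module R A] [AddCommGroup B] [Module R B]
    [AddCommGroup W] [Module R W] (π : A →ₗ[R] B) (hπ : Function.Surjective π)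
    (g : A →ₗ[R] W) (h : ker π ≤ ker g) : ∃ gbar : B →ₗ[R] W, gbar.comp π = g := by
  refine ⟨(Submodule.liftQ (ker π) g h).comp
    (π.quotKerEquivOfSurjective hπ).symm.toLinearMap, ?_⟩
  ext a
  have h1 : (π.quotKerEquivOfSurjective hπ).symm (π a) = Submodule.Quotient.mk a := by
    rw [LinearEquiv.symm_apply_eq]
    show π a = _
    simp [LinearMap.quotKerEquivOfSurjective]
  show Submodule.liftQ (ker π) g h ((π.quotKerEquivOfSurjective hπ).symm (π a)) = g a
  rw [h1, Submodule.liftQ_apply]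

/-- The free cover of a module. -/
noncomputable def cover (W : ModuleCat.{u} R) :
    (ModuleCat.of R (↥W →₀ R)) →ₗ[R] W :=
  Finsupp.linearCombination R _root_.id

lemma cover_surjective (W : ModuleCat.{u} R) : Function.Surjective (cover W) := by
  have h : Function.Surjective (Finsupp.linearCombination R (_root_.id : ↥W → ↥W)) :=
    fun w => ⟨Finsupp.single w 1, by simp⟩
  exact h

noncomputable def syzObj (U : ModuleCat.{u} R) : ℕ → ModuleCat.{u} R
  | 0 => U
  | (i+1) => ModuleCat.of R (ker (cover (syzObj U i)))

/-- The standard free resolution. -/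
noncomputable def stdRes (U : ModuleCat.{u} R) : FreeRes U where
  X i := ModuleCat.of R (↥(syzObj U i) →₀ R)
  d i := (ker (cover (syzObj U i))).subtype.comp (cover (syzObj U (i+1)))
  ε := cover U
  free i := by dsimp only; exact inferInstanceAs (Module.Free R (↥(syzObj U i) →₀ R))
  hε := cover_surjective U
  h0 := by
    apply LinearMap.exact_iff.mpr
    show ker (cover U) = LinearMap.range ((ker (cover U)).subtype.comp (cover (syzObj U 1)))
    erw [LinearMap.range_comp, LinearMap.range_eq_top.mpr (cover_surjective _),
      Submodule.map_top, Submodule.range_subtype]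
  hd i := by
    apply LinearMap.exact_iff.mpr
    show ker ((ker (cover (syzObj U i))).subtype.comp (cover (syzObj U (i+1)))) =
      LinearMap.range ((ker (cover (syzObj U (i+1)))).subtype.comp (cover (syzObj U (i+2))))
    erw [LinearMap.ker_comp, Submodule.ker_subtype, Submodule.comap_bot,
      LinearMap.range_comp, LinearMap.range_eq_top.mpr (cover_surjective _),
      Submodule.map_top, Submodule.range_subtype]
    rfl

/-- Prepending a step to a free resolution. -/
noncomputable def FreeRes.prepend {U F : ModuleCat.{u} R} (f : F →ₗ[R] U)
    (hf : Function.Surjective f) (hF : Module.Free R F)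
    (Q : FreeRes (ModuleCat.of R (ker f))) : FreeRes U where
  X i := match i with
    | 0 => F
    | (i+1) => Q.X i
  d i := match i with
    | 0 => (ker f).subtype.comp Q.ε
    | (i+1) => Q.d i
  ε := f
  free i := match i with
    | 0 => hF
    | (i+1) => Q.free i
  hε := hf
  h0 := by
    rw [LinearMap.exact_iff]
    show ker f = LinearMap.range ((ker f).subtype.comp Q.ε)
    rw [LinearMap.range_comp, LinearMap.range_eq_top.mpr Q.hε,
      Submodule.map_top, Submodule.range_subtype]
  hd i := match i with
    | 0 => by
      rw [LinearMap.exact_iff]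
      show ker ((ker f).subtype.comp Q.ε) = LinearMap.range (Q.d 0)
      rw [LinearMap.ker_comp, Submodule.ker_subtype, Submodule.comap_bot]
      exact LinearMap.exact_iff.mp Q.h0
    | (i+1) => Q.hd i

/-- Transporting a free resolution along an isomorphism. -/
noncomputable def FreeRes.congr {U U' : ModuleCat.{u} R} (e : U ≃ₗ[R] U')
    (Q : FreeRes U) : FreeRes U' where
  X := Q.X
  d := Q.d
  ε := (e : U →ₗ[R] U').comp Q.ε
  free := Q.free
  hε := e.surjective.comp Q.hε
  h0 := by
    rw [LinearMap.exact_iff, LinearMap.ker_comp, LinearEquiv.ker, Submodule.comap_bot]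
    exact LinearMap.exact_iff.mp Q.h0
  hd := Q.hd

/-- The lifting condition in degree one. -/
def lifts (M : ModuleCat.{u} R) {K : ModuleCat.{u} R} (Q : FreeRes K) : Prop :=
  ∀ g : Q.X 1 →ₗ[R] M, g.comp (Q.d 1) = 0 → ∃ h : Q.X 0 →ₗ[R] M, h.comp (Q.d 0) = g

lemma build (M : ModuleCat.{u} R) :
    ∀ (m : ℕ) (U K : ModuleCat.{u} R), IsSyzygy R m U K → ∀ Q : FreeRes K,
      ∃ P : FreeRes U,
        ((∀ g : P.X (m+1) →ₗ[R] M, g.comp (P.d (m+1)) = 0 →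
          ∃ h : P.X m →ₗ[R] M, h.comp (P.d m) = g) ↔ lifts M Q)
  | 0, U, K, h, Q => by
    obtain ⟨e⟩ := h
    exact ⟨Q.congr e, Iff.rfl⟩
  | (m+1), U, K, h, Q => by
    obtain ⟨F, f, hfree, _hfin, hsurj, hsyz⟩ := h
    obtain ⟨P, hP⟩ := build M m _ K hsyz Q
    exact ⟨P.prepend f hsurj hfree, hP⟩

/-- The main dimension-shifting lemma: `Ext^{m+1}(U, M)` vanishes iff maps from the kernel
of any free cover of an `m`-th syzygy of `U` extend. -/
lemma main_iff (M : ModuleCat.{u} R) {m : ℕ} {U K : ModuleCat.{u} R}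
    (hsyz : IsSyzygy R m U K) {F : ModuleCat.{u} R} (hF : Module.Free R F)
    (π : F →ₗ[R] K) (hπ : Function.Surjective π) :
    ExtVanishes R (m+1) U M ↔
      ∀ φ : ↥(ker π) →ₗ[R] M, ∃ h : F →ₗ[R] M, h.comp (ker π).subtype = φ := by
  set W := ModuleCat.of R (ker π) with hW
  set Q := FreeRes.prepend π hπ hF (stdRes W) with hQ
  obtain ⟨P, hP⟩ := build M m U K hsyz Q
  rw [P.extVanishes_iff m, hP]
  have hQd0 : Q.d 0 = (ker π).subtype.comp (cover W) := rfl
  constructor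
  · intro H φ
    have hzero : (φ.comp (cover W)).comp (Q.d 1) = 0 := by
      ext x
      show φ (cover W ((ker (cover W)).subtype (cover (syzObj W 1) x))) = 0
      rw [show cover W ((ker (cover W)).subtype (cover (syzObj W 1) x)) = 0 from
        (cover (syzObj W 1) x).2, map_zero]
    obtain ⟨h, hh⟩ := H (φ.comp (cover W)) hzero
    refine ⟨h, ?_⟩
    have : (h.comp (ker π).subtype).comp (cover W) = φ.comp (cover W) := by
      erw [LinearMap.comp_assoc]; exact hh
    exact (LinearMap.cancel_right (cover_surjective W)).mp this
  · intro H g hg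
    have hker : ker (cover W) ≤ ker g := by
      intro x hx
      obtain ⟨y, hy⟩ := cover_surjective (syzObj W 1) ⟨x, hx⟩
      have h2 : (Q.d 1) y = x := congrArg Subtype.val hy
      have h3 : g ((Q.d 1) y) = 0 := LinearMap.congr_fun hg y
      rw [h2] at h3
      exact h3
    obtain ⟨φ', hφ'⟩ := factor (cover W) (cover_surjective W) g hker
    obtain ⟨h, hh⟩ := H φ'
    refine ⟨h, ?_⟩
    erw [hQd0, ← LinearMap.comp_assoc, hh, hφ']

lemma exists_syzygy : ∀ (m : ℕ) (U : ModuleCat.{u} R), IsNPresented R (m+1) U →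
    ∃ K, IsSyzygy R m U K
  | 0, U, _ => ⟨U, ⟨LinearEquiv.refl R U⟩⟩
  | (m+1), U, h => by
    obtain ⟨F, f, h1, h2, h3, h4⟩ := h
    obtain ⟨K, hK⟩ := exists_syzygy m _ h4
    exact ⟨K, F, f, h1, h2, h3, hK⟩

end FreeResolutions

section Hull

variable {R : Type u} [Ring R] {E : Type u} [AddCommGroup E] [Module R E]

/-- `M₀` is an essential submodule of `N`. -/
def IsEssIn (M₀ N : Submodule R E) : Prop :=
  M₀ ≤ N ∧ ∀ x ∈ N, x ≠ 0 → ∃ r : R, r • x ∈ M₀ ∧ r • x ≠ 0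

/-- Existence of an injective hull inside any injective module. -/
lemma exists_hull (hE : Module.Injective R E) (M₀ : Submodule R E) :
    ∃ H : Submodule R E, IsEssIn M₀ H ∧ Module.Injective R ↥H := by
  obtain ⟨H, hMH, hHmax⟩ : ∃ H, M₀ ≤ H ∧ Maximal (fun N => IsEssIn M₀ N) H := by
    apply zorn_le_nonempty₀
    · intro c hc hchain N hN
      refine ⟨sSup c, ⟨le_trans (hc hN).1 (le_sSup hN), ?_⟩, fun z hz => le_sSup hz⟩
      intro x hx hx0
      obtain ⟨N', hN', hxN'⟩ := (Submodule.mem_sSup_of_directed ⟨N, hN⟩ hchain.directedOn).mp hx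
      exact (hc hN').2 x hxN' hx0
    · exact ⟨le_refl M₀, fun x hx hx0 => ⟨1, by simpa using hx, by simpa using hx0⟩⟩
  have hHess : IsEssIn M₀ H := hHmax.prop
  have hub : ∀ c ⊆ {N : Submodule R E | H ⊓ N = ⊥}, IsChain (· ≤ ·) c → ∀ N ∈ c,
      ∃ ub ∈ {N : Submodule R E | H ⊓ N = ⊥}, ∀ z ∈ c, z ≤ ub := by
    intro c hc hchain N hN
    refine ⟨sSup c, ?_, fun z hz => le_sSup hz⟩
    rw [Set.mem_setOf_eq, eq_bot_iff]
    rintro x hx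
    obtain ⟨hxH, hxS⟩ := Submodule.mem_inf.mp hx
    obtain ⟨N', hN', hxN'⟩ := (Submodule.mem_sSup_of_directed ⟨N, hN⟩ hchain.directedOn).mp hxS
    have hmem : x ∈ H ⊓ N' := Submodule.mem_inf.mpr ⟨hxH, hxN'⟩
    rwa [hc hN'] at hmem
  obtain ⟨C, -, hCmax⟩ := zorn_le_nonempty₀ {N : Submodule R E | H ⊓ N = ⊥} hub ⊥ (by simp)
  have hHC : H ⊓ C = ⊥ := hCmax.prop
  set q := C.mkQ with hq
  set ψ : ↥H →ₗ[R] (E ⧸ C) := q.comp H.subtype with hψ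
  have hψinj : Function.Injective ψ := by
    rw [← LinearMap.ker_eq_bot, eq_bot_iff]
    intro z hz
    have h1 : Submodule.Quotient.mk (z : E) = (0 : E ⧸ C) := hz
    have hzC : (z : E) ∈ C := (Submodule.Quotient.mk_eq_zero C).mp h1
    have : (z : E) ∈ H ⊓ C := Submodule.mem_inf.mpr ⟨z.2, hzC⟩
    rw [hHC] at this
    exact Subtype.ext this
  have hAess : ∀ z : E ⧸ C, z ≠ 0 → ∃ r : R, r • z ∈ LinearMap.range ψ ∧ r • z ≠ 0 := by
    intro z hz
    obtain ⟨x, rfl⟩ := C.mkQ_surjective z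
    have hxC : x ∉ C := fun hmem => hz ((Submodule.Quotient.mk_eq_zero C).mpr hmem)
    have hCC' : ¬ (H ⊓ (C ⊔ R ∙ x) = ⊥) := by
      intro h0
      exact hxC (hCmax.2 h0 le_sup_left
        (Submodule.mem_sup_right (Submodule.mem_span_singleton_self x)))
    obtain ⟨v, hv, hv0⟩ := Submodule.exists_mem_ne_zero_of_ne_bot hCC'
    obtain ⟨hvH, hvC'⟩ := Submodule.mem_inf.mp hv
    obtain ⟨c, hc, w, hw, hvcw⟩ := Submodule.mem_sup.mp hvC'
    obtain ⟨r, rfl⟩ := Submodule.mem_span_singleton.mp hw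
    have hvq : C.mkQ v = r • (C.mkQ x : E ⧸ C) := by
      rw [← hvcw, map_add, map_smul,
        show C.mkQ c = 0 from (Submodule.Quotient.mk_eq_zero C).mpr hc, zero_add]
    refine ⟨r, ?_, ?_⟩
    · rw [← hvq]; exact ⟨⟨v, hvH⟩, rfl⟩
    · rw [← hvq]
      intro hvz
      have hvC : v ∈ C := (Submodule.Quotient.mk_eq_zero C).mp hvz
      have hmem : v ∈ H ⊓ C := Submodule.mem_inf.mpr ⟨hvH, hvC⟩
      rw [hHC] at hmem
      exact hv0 hmem
  obtain ⟨φ₀, hφ₀⟩ := hE.out (LinearMap.range ψ).subtype (Submodule.injective_subtype _)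
      (H.subtype.comp (LinearEquiv.ofInjective ψ hψinj).symm.toLinearMap)
  have hφ₀H : ∀ hh : ↥H, φ₀ (ψ hh) = (hh : E) := by
    intro hh
    have h1 := hφ₀ ⟨ψ hh, ⟨hh, rfl⟩⟩
    calc φ₀ (ψ hh)
        = (H.subtype.comp (LinearEquiv.ofInjective ψ hψinj).symm.toLinearMap)
          (⟨ψ hh, ⟨hh, rfl⟩⟩ : ↥(LinearMap.range ψ)) := h1
      _ = (hh : E) := by
          show H.subtype ((LinearEquiv.ofInjective ψ hψinj).symm ⟨ψ hh, ⟨hh, rfl⟩⟩) = (hh : E)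
          rw [show (LinearEquiv.ofInjective ψ hψinj).symm ⟨ψ hh, ⟨hh, rfl⟩⟩ = hh from
            hψinj (by rw [LinearEquiv.ofInjective_symm_apply])]
          rfl
  have hφ₀inj : Function.Injective φ₀ := by
    rw [← LinearMap.ker_eq_bot, eq_bot_iff]
    intro z hz
    have hz0 : φ₀ z = 0 := hz
    by_contra hzne
    have hzne' : z ≠ 0 := fun h => hzne (by simp [h])
    obtain ⟨r, hrA, hr0⟩ := hAess z hzne'
    obtain ⟨hh, hhv⟩ := hrA
    have h1 : φ₀ (r • z) = (hh : E) := by rw [← hhv, hφ₀H]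
    have h2 : φ₀ (r • z) = 0 := by rw [map_smul, hz0, smul_zero]
    have : hh = 0 := Subtype.ext (by rw [← h1, h2]; simp)
    rw [this, map_zero] at hhv
    exact hr0 hhv.symm
  have hrange : LinearMap.range φ₀ ≤ H := by
    have hHle : H ≤ LinearMap.range φ₀ := by
      intro h hh
      exact ⟨ψ ⟨h, hh⟩, hφ₀H ⟨h, hh⟩⟩
    have hEss : IsEssIn M₀ (LinearMap.range φ₀) := by
      refine ⟨le_trans hHess.1 hHle, ?_⟩
      rintro x ⟨z, rfl⟩ hx0
      have hz0 : z ≠ 0 := fun h => hx0 (by rw [h, map_zero])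
      obtain ⟨r, hrA, hr0⟩ := hAess z hz0
      obtain ⟨hh, hhv⟩ := hrA
      have h1 : r • φ₀ z = (hh : E) := by rw [← map_smul, ← hhv, hφ₀H]
      have h2 : r • φ₀ z ≠ 0 := by
        rw [← map_smul]
        intro h
        exact hr0 (hφ₀inj (by rw [h, map_zero]))
      have hmemH : r • φ₀ z ∈ H := by rw [h1]; exact hh.2
      obtain ⟨s, hs1, hs2⟩ := hHess.2 _ hmemH h2
      exact ⟨s * r, by rwa [← smul_smul], by rwa [← smul_smul]⟩
    exact hHmax.2 hEss hHle
  refine ⟨H, hHess, ⟨?_⟩⟩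
  intro X Y _ _ _ _ f hf g
  obtain ⟨h, hh⟩ := hE.out f hf (H.subtype.comp g)
  refine ⟨LinearMap.codRestrict H (φ₀.comp (q.comp h)) (fun y => hrange ⟨q (h y), rfl⟩),
    fun x => ?_⟩
  apply Subtype.ext
  show φ₀ (q (h (f x))) = ((g x : ↥H) : E)
  rw [hh x]
  exact hφ₀H (g x)

end Hull

end SXP

namespace SXP

variable {R : Type u} [Ring R]

/-- Corestriction of a map landing in the range of an injection. -/
noncomputable def pullback {M' B A : Type u} [AddCommGroup M'] [Module R M']
    [AddCommGroup B] [Module R B] [AddCommGroup A] [Module R A]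
    (i : M' →ₗ[R] B) (hi : Function.Injective i) (y : A →ₗ[R] B)
    (hmem : ∀ a, y a ∈ LinearMap.range i) : A →ₗ[R] M' :=
  (LinearEquiv.ofInjective i hi).symm.toLinearMap.comp
    (LinearMap.codRestrict (LinearMap.range i) y hmem)

lemma pullback_spec {M' B A : Type u} [AddCommGroup M'] [Module R M']
    [AddCommGroup B] [Module R B] [AddCommGroup A] [Module R A]
    (i : M' →ₗ[R] B) (hi : Function.Injective i) (y : A →ₗ[R] B)
    (hmem : ∀ a, y a ∈ LinearMap.range i) (a : A) :
    i (pullback i hi y hmem a) = y a := by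
  show i ((LinearEquiv.ofInjective i hi).symm ⟨y a, hmem a⟩) = y a
  rw [LinearEquiv.ofInjective_symm_apply]

end SXP

/-- characterizations of `n`-𝒳-injective modules via special 𝒳-purity. -/
theorem statement_0 (R : Type u) [Ring R] (𝒳 : Set (ModuleCat.{u} R)) (n : ℕ) (hn : 1 ≤ n)
    (M : ModuleCat.{u} R) :
    List.TFAE [
      -- (1) `M` is `n`-𝒳-injective
      IsNXInjective R 𝒳 n M,
      -- (2) every short exact sequence `0 → M → A → C → 0` is special 𝒳-pure
      ∀ (A C : ModuleCat.{u} R) (i : M →ₗ[R] A) (p : A →ₗ[R] C),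
        Function.Injective i → Function.Surjective p → Function.Exact i p →
        IsSpecialXPure R 𝒳 n i p,
      -- (3) `M` is special 𝒳-pure in every injective module containing it
      ∀ (E : ModuleCat.{u} R) (i : M →ₗ[R] E), Module.Injective R E → Function.Injective i →
        IsSpecialXPure R 𝒳 n i (LinearMap.range i).mkQ,
      -- (4) `M` is special 𝒳-pure in its injective envelope `E(M)`
      ∀ (E : ModuleCat.{u} R) (i : M →ₗ[R] E), Module.Injective R E → Function.Injective i →
        (∀ S : Submodule R E, S ≠ ⊥ → S ⊓ LinearMap.range i ≠ ⊥) →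
        IsSpecialXPure R 𝒳 n i (LinearMap.range i).mkQ
    ] := by
  obtain ⟨m, rfl⟩ : ∃ m, n = m + 1 := ⟨n - 1, (Nat.succ_pred_eq_of_pos hn).symm⟩
  tfae_have 1 → 2 := by
    intro h1 A C i p hi hp hexact K hK
    refine ⟨?_, ?_, ?_⟩
    · intro g g' hgg'
      ext x
      exact hi (LinearMap.congr_fun hgg' x)
    · intro y
      constructor
      · intro hy
        have hmem : ∀ x : ↥K, y x ∈ LinearMap.range i := fun x => by
          obtain ⟨mm, hmm⟩ := (hexact (y x)).mp (LinearMap.congr_fun hy x)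
          exact ⟨mm, hmm⟩
        refine ⟨SXP.pullback i hi y hmem, ?_⟩
        ext x
        exact SXP.pullback_spec i hi y hmem x
      · rintro ⟨g', rfl⟩
        ext x
        show p (i (g' x)) = 0
        exact hexact.apply_apply_eq_zero (g' x)
    · intro g
      obtain ⟨U, hU𝒳, hUpres, hsyz⟩ := hK
      rw [Nat.add_sub_cancel] at hsyz
      have hvan : ExtVanishes R (m+1) U M := h1 U hU𝒳 hUpres
      have hext := (SXP.main_iff M hsyz (inferInstanceAs (Module.Free R (↥K →₀ R)))
        (SXP.cover K) (SXP.cover_surjective K)).mp hvan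
      letI : Module.Projective R ↥(ModuleCat.of R (↥K →₀ R)) :=
        inferInstanceAs (Module.Projective R (↥K →₀ R))
      obtain ⟨h, hh⟩ := Module.projective_lifting_property p (g.comp (SXP.cover K)) hp
      have hmem : ∀ x : ↥(LinearMap.ker (SXP.cover K)),
          (h.comp (LinearMap.ker (SXP.cover K)).subtype) x ∈ LinearMap.range i := by
        intro x
        have e1 := LinearMap.congr_fun hh ((LinearMap.ker (SXP.cover K)).subtype x)
        have e2 : (g.comp (SXP.cover K)) ((LinearMap.ker (SXP.cover K)).subtype x) = 0 := by
          rw [LinearMap.comp_apply,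
            show SXP.cover K ((LinearMap.ker (SXP.cover K)).subtype x) = 0 from x.2, map_zero]
        have h1' : p ((h.comp (LinearMap.ker (SXP.cover K)).subtype) x) = 0 := by
          rw [LinearMap.comp_apply]; rw [e2] at e1; exact e1
        obtain ⟨mm, hmm⟩ := (hexact _).mp h1'
        exact ⟨mm, hmm⟩
      obtain ⟨ψ, hψ⟩ := hext (SXP.pullback i hi _ hmem)
      obtain ⟨gbar, hgbar⟩ := SXP.factor (SXP.cover K) (SXP.cover_surjective K)
        (h - i.comp ψ) (fun x hx => by
          show (h - i.comp ψ) x = 0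
          have e3 : ψ x = SXP.pullback i hi _ hmem (⟨x, hx⟩ : ↥(LinearMap.ker (SXP.cover K))) := LinearMap.congr_fun hψ ⟨x, hx⟩
          have e4 : i (ψ x) = h x := by
            rw [e3, SXP.pullback_spec]
            rfl
          rw [LinearMap.sub_apply, LinearMap.comp_apply, e4, sub_self])
      refine ⟨gbar, ?_⟩
      have hcomp : (p.comp gbar).comp (SXP.cover K) = g.comp (SXP.cover K) := by
        rw [LinearMap.comp_assoc, hgbar]
        refine LinearMap.ext fun x => ?_
        show p (h x - i (ψ x)) = g (SXP.cover K x)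
        rw [map_sub, hexact.apply_apply_eq_zero (ψ x), sub_zero]
        exact LinearMap.congr_fun hh x
      exact (LinearMap.cancel_right (SXP.cover_surjective K)).mp hcomp
  tfae_have 2 → 3 := by
    intro h2 E i hE hi
    exact h2 E (ModuleCat.of R (↥E ⧸ LinearMap.range i)) i (LinearMap.range i).mkQ hi
      (Submodule.mkQ_surjective _) (by
        rw [LinearMap.exact_iff, Submodule.ker_mkQ])
  tfae_have 3 → 4 := by
    intro h3 E i hE hi _
    exact h3 E i hE hi
  tfae_have 4 → 1 := by
    intro h4 U hU𝒳 hUpres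
    obtain ⟨K, hsyz⟩ := SXP.exists_syzygy m U hUpres
    have hKspec : IsSpecialPresented R 𝒳 (m+1) K :=
      ⟨U, hU𝒳, hUpres, by rwa [Nat.add_sub_cancel]⟩
    set E₀ := Injective.under M with hE₀def
    have hinj0 : CategoryTheory.Injective (ModuleCat.of R ↥E₀) := by
      rw [ModuleCat.of_coe]
      exact Injective.injective_under M
    have hE₀inj : Module.Injective R ↥E₀ := Module.injective_module_of_injective_object R ↥E₀
    set j : ↥M →ₗ[R] ↥E₀ := (Injective.ι M : M ⟶ E₀).hom with hjdef
    have hjinj : Function.Injective j := by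
      have hmono := Injective.ι_mono M
      exact (ModuleCat.mono_iff_injective (Injective.ι M)).mp hmono
    obtain ⟨H, hHess, hHinj⟩ := SXP.exists_hull hE₀inj (LinearMap.range j)
    set i : ↥M →ₗ[R] ↥(ModuleCat.of R ↥H) :=
      LinearMap.codRestrict H j (fun mm => hHess.1 ⟨mm, rfl⟩) with hidef
    have hiinj : Function.Injective i := fun a b hab => hjinj (congrArg Subtype.val hab)
    have hHinj' : Module.Injective R ↥(ModuleCat.of R ↥H) := hHinj
    have hesscond : ∀ S : Submodule R ↥(ModuleCat.of R ↥H),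
        S ≠ ⊥ → S ⊓ LinearMap.range i ≠ ⊥ := by
      intro S hS
      obtain ⟨x, hxS, hx0⟩ := Submodule.exists_mem_ne_zero_of_ne_bot hS
      let x' : ↥H := x
      have hx0' : (x' : ↥E₀) ≠ 0 := fun hc => hx0 (Subtype.ext hc)
      obtain ⟨r, hrmem, hr0⟩ := hHess.2 (x' : ↥E₀) x'.2 hx0'
      obtain ⟨mm, hmm⟩ := hrmem
      rw [Submodule.ne_bot_iff]
      refine ⟨r • x, Submodule.mem_inf.mpr ⟨S.smul_mem r hxS, ⟨mm, Subtype.ext ?_⟩⟩, ?_⟩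
      · show j mm = ((r • x' : ↥H) : ↥E₀)
        rw [hmm]
        rfl
      · intro hc
        apply hr0
        have hc' : (r • x' : ↥H) = 0 := hc
        rw [show r • (x' : ↥E₀) = ((r • x' : ↥H) : ↥E₀) from rfl, hc']
        rfl
    have hpure := h4 (ModuleCat.of R ↥H) i hHinj' hiinj hesscond
    have hsurjK := (hpure K hKspec).2.2
    refine (SXP.main_iff M hsyz (inferInstanceAs (Module.Free R (↥K →₀ R)))
      (SXP.cover K) (SXP.cover_surjective K)).mpr ?_
    intro φ
    obtain ⟨h0, hh0⟩ := hHinj'.out (LinearMap.ker (SXP.cover K)).subtype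
      (Submodule.injective_subtype _) (i.comp φ)
    obtain ⟨g, hg⟩ := SXP.factor (SXP.cover K) (SXP.cover_surjective K)
      ((LinearMap.range i).mkQ.comp h0) (fun x hx => by
        show (LinearMap.range i).mkQ (h0 x) = 0
        rw [show h0 x = i (φ ⟨x, hx⟩) from hh0 ⟨x, hx⟩]
        exact (Submodule.Quotient.mk_eq_zero _).mpr ⟨φ ⟨x, hx⟩, rfl⟩)
    obtain ⟨gt, hgt⟩ := hsurjK g
    have hmem2 : ∀ x, (h0 - gt.comp (SXP.cover K)) x ∈ LinearMap.range i := by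
      intro x
      have e1 : g (SXP.cover K x) = (LinearMap.range i).mkQ (h0 x) := LinearMap.congr_fun hg x
      have e2 : (LinearMap.range i).mkQ (gt (SXP.cover K x)) = g (SXP.cover K x) :=
        LinearMap.congr_fun hgt (SXP.cover K x)
      have e3 : (LinearMap.range i).mkQ ((h0 - gt.comp (SXP.cover K)) x) = 0 := by
        rw [show (h0 - gt.comp (SXP.cover K)) x = h0 x - gt (SXP.cover K x) from rfl,
          map_sub, ← e1, e2, sub_self]
      exact (Submodule.Quotient.mk_eq_zero _).mp e3
    refine ⟨SXP.pullback i hiinj _ hmem2, ?_⟩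
    ext x
    apply hiinj
    rw [LinearMap.comp_apply, SXP.pullback_spec]
    show h0 ((LinearMap.ker (SXP.cover K)).subtype x) -
      gt (SXP.cover K ((LinearMap.ker (SXP.cover K)).subtype x)) = i (φ x)
    rw [show SXP.cover K ((LinearMap.ker (SXP.cover K)).subtype x) = 0 from x.2,
      map_zero, sub_zero]
    exact hh0 x
  tfae_finish
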